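/- arXiv:2203.09352 — 3 statements merged into one kernel-verified Lean document; each statement's English description precedes it below -/
import Mathlib

section
/- If X and Y are subgroups of a discrete p-toral group P with X a proper subgroup of Y, then X is a proper subgroup of its normalizer in Y, i.e., X < N_Y(X). -/
open Subgroup

/-- The Prüfer `p`-group: the `p`-primary component of `ℚ/ℤ`,
written multiplicatively. -/
def Prufer (p : ℕ) [Fact p.Prime] : Type :=
  Multiplicative
    (AddCommGroup.primaryComponent (ℚ ⧸ AddSubgroup.zmultiples (1 : ℚ)) p)

instance (p : ℕ) [Fact p.Prime] : CommGroup (Prufer p) :=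
  inferInstanceAs (CommGroup (Multiplicative _))

/-- `T` is a `p`-torus of rank `k`: a direct product of `k` copies of the
Prüfer `p`-group. -/
def IsPTorusOfRank (p : ℕ) [Fact p.Prime] (k : ℕ) (T : Type*) [Group T] : Prop :=
  Nonempty (T ≃* (Fin k → Prufer p))

/-- `T` is a `p`-torus: a finite direct product of copies of the Prüfer `p`-group. -/
def IsPTorus (p : ℕ) [Fact p.Prime] (T : Type*) [Group T] : Prop :=
  ∃ k : ℕ, IsPTorusOfRank p k T

/-- A group is virtually `p`-toral if it has a `p`-torus of finite index. -/
def IsVirtuallyPToral (p : ℕ) [Fact p.Prime] (G : Type*) [Group G] : Prop :=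
  ∃ T : Subgroup G, IsPTorus p T ∧ T.FiniteIndex

/-- A discrete `p`-toral group is a virtually `p`-toral `p`-group. -/
def IsDiscretePToral (p : ℕ) [Fact p.Prime] (P : Type*) [Group P] : Prop :=
  IsPGroup p P ∧ IsVirtuallyPToral p P

lemma prufer_div (p : ℕ) [Fact p.Prime] (x : Prufer p) (n : ℕ) :
    ∃ y : Prufer p, y ^ p ^ n = x := by
  have hp : (p : ℚ) ^ n ≠ 0 := by
    have := (Fact.out : p.Prime).pos
    positivity
  obtain ⟨x', hx'⟩ : ∃ x' : (AddCommGroup.primaryComponent (ℚ ⧸ AddSubgroup.zmultiples (1 : ℚ)) p),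
      Multiplicative.ofAdd x' = x := ⟨Multiplicative.toAdd x, rfl⟩
  obtain ⟨q, hq⟩ := QuotientAddGroup.mk_surjective (x' : ℚ ⧸ AddSubgroup.zmultiples (1 : ℚ))
  set y0 : ℚ ⧸ AddSubgroup.zmultiples (1 : ℚ) := QuotientAddGroup.mk (q / (p : ℚ) ^ n) with hy0
  have key : (p ^ n : ℕ) • y0 = (x' : ℚ ⧸ AddSubgroup.zmultiples (1 : ℚ)) := by
    rw [hy0, ← hq]
    have : (p ^ n : ℕ) • (q / (p : ℚ) ^ n) = q := by
      rw [nsmul_eq_mul]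
      push_cast
      field_simp
    rw [show ((p ^ n : ℕ) • (QuotientAddGroup.mk (q / (p:ℚ)^n) : ℚ ⧸ AddSubgroup.zmultiples (1 : ℚ)))
        = QuotientAddGroup.mk ((p ^ n : ℕ) • (q / (p:ℚ)^n)) from rfl, this]
  have hmem : y0 ∈ AddCommGroup.primaryComponent (ℚ ⧸ AddSubgroup.zmultiples (1 : ℚ)) p := by
    obtain ⟨a, ha⟩ := x'.2
    refine AddCommGroup.mem_primaryComponent.mpr ?_
    refine ⟨a + n, ?_⟩
    rw [pow_add, mul_smul, key]
    exact ha
  refine ⟨Multiplicative.ofAdd ⟨y0, hmem⟩, ?_⟩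
  rw [← hx']
  refine (ofAdd_nsmul _ _).symm.trans ?_
  congr 1
  exact Subtype.ext (by simpa using key)

lemma prufer_torsion (p : ℕ) [Fact p.Prime] (x : Prufer p) : ∃ m, x ^ p ^ m = 1 := by
  obtain ⟨a, ha⟩ := (Multiplicative.toAdd x).2
  refine ⟨a, ?_⟩
  have : (p:ℕ) ^ a • (Multiplicative.toAdd x) = 0 := by
    refine Subtype.ext ?_
    push_cast
    rw [← ha]
  have h : x ^ p ^ a = (Multiplicative.ofAdd ((p:ℕ) ^ a • Multiplicative.toAdd x) : Prufer p) := by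
    rw [ofAdd_nsmul]; rfl
  rw [h, this]; rfl


section Torus
variable {p : ℕ} [Fact p.Prime] {P : Type*} [Group P]

lemma torus_div {T : Subgroup P} (hT : IsPTorus p ↥T) {t : P} (ht : t ∈ T) (n : ℕ) :
    ∃ s ∈ T, s ^ p ^ n = t := by
  obtain ⟨k, ⟨e⟩⟩ := hT
  choose f hf using fun i => prufer_div p (e ⟨t, ht⟩ i) n
  refine ⟨↑(e.symm f), (e.symm f).2, ?_⟩
  have : (e.symm f) ^ p ^ n = ⟨t, ht⟩ := by
    apply e.injective
    rw [map_pow, e.apply_symm_apply]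
    ext i
    exact hf i
  calc (↑(e.symm f) : P) ^ p ^ n = ↑((e.symm f) ^ p ^ n) := by push_cast; rfl
    _ = t := by rw [this]

lemma torus_comm {T : Subgroup P} (hT : IsPTorus p ↥T) {a b : P}
    (ha : a ∈ T) (hb : b ∈ T) : a * b = b * a := by
  obtain ⟨k, ⟨e⟩⟩ := hT
  have : (⟨a, ha⟩ : T) * ⟨b, hb⟩ = ⟨b, hb⟩ * ⟨a, ha⟩ := by
    apply e.injective
    rw [map_mul, map_mul, mul_comm]
  simpa [Subtype.ext_iff] using this

lemma torus_normal (hPp : IsPGroup p P) (T : Subgroup P) (hT : IsPTorus p ↥T)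
    (hFI : T.FiniteIndex) : T.Normal := by
  haveI := hFI
  haveI : T.normalCore.FiniteIndex := Subgroup.finiteIndex_normalCore T
  haveI : Finite (P ⧸ T.normalCore) := Subgroup.finite_quotient_of_finiteIndex
  obtain ⟨n, hn⟩ := IsPGroup.iff_card.mp (hPp.to_quotient T.normalCore)
  have key : ∀ y : P, y ^ p ^ n ∈ T.normalCore := by
    intro y
    rw [← QuotientGroup.eq_one_iff, QuotientGroup.mk_pow, ← hn]
    exact pow_card_eq_one'
  constructor
  intro t ht g
  obtain ⟨s, hs, hst⟩ := torus_div hT ht n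
  have : g * t * g⁻¹ = (g * s * g⁻¹) ^ p ^ n := by
    rw [conj_pow, hst]
  rw [this]
  exact T.normalCore_le (key _)

end Torus

lemma pgroup_finite_rel_normalizer {G : Type*} [Group G] [Finite G] {p : ℕ} [Fact p.Prime]
    (hG : IsPGroup p G) {H K : Subgroup G} (h : H < K) :
    ∃ g ∈ K, g ∉ H ∧ g ∈ normalizer (H : Set G) := by
  haveI : Group.IsNilpotent ↥K := (hG.to_subgroup K).isNilpotent
  have hnc := normalizerCondition_of_isNilpotent (G := ↥K)
  have hlt : H.subgroupOf K < ⊤ := by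
    obtain ⟨y, hyK, hyH⟩ := SetLike.exists_of_lt h
    refine lt_top_iff_ne_top.mpr fun htop => hyH ?_
    have : (⟨y, hyK⟩ : K) ∈ H.subgroupOf K := htop ▸ Subgroup.mem_top _
    rwa [Subgroup.mem_subgroupOf] at this
  obtain ⟨u, huN, huH⟩ := SetLike.exists_of_lt (hnc _ hlt)
  have hHK : H ≤ K := h.le
  refine ⟨↑u, u.2, fun hu => huH (by rwa [Subgroup.mem_subgroupOf]), ?_⟩
  rw [Subgroup.mem_normalizer_iff]
  intro h'
  constructor
  · intro hh
    have hv : (⟨h', hHK hh⟩ : K) ∈ H.subgroupOf K := by rwa [Subgroup.mem_subgroupOf]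
    have := (Subgroup.mem_normalizer_iff.mp huN _).mp hv
    rwa [Subgroup.mem_subgroupOf] at this
  · intro hgh
    have hK' : h' ∈ K := by
      have : (↑u)⁻¹ * (↑u * h' * (↑u)⁻¹) * ↑u ∈ K := K.mul_mem (K.mul_mem (K.inv_mem u.2) (hHK hgh)) u.2
      simpa [mul_assoc] using this
    have hv : u * ⟨h', hK'⟩ * u⁻¹ ∈ H.subgroupOf K := by
      rw [Subgroup.mem_subgroupOf]; exact hgh
    have := (Subgroup.mem_normalizer_iff.mp huN _).mpr hv
    rwa [Subgroup.mem_subgroupOf] at this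

section CaseA
variable {p : ℕ} [Fact p.Prime] {P : Type*} [Group P]

lemma caseA (hPp : IsPGroup p P) (T : Subgroup P) [T.Normal] [T.FiniteIndex]
    {X Y : Subgroup P} (hXY : X < Y) (hTX : Y ⊓ T ≤ X) :
    ∃ g ∈ Y, g ∉ X ∧ g ∈ normalizer (X : Set P) := by
  haveI : Finite (P ⧸ T) := Subgroup.finite_quotient_of_finiteIndex
  set π := QuotientGroup.mk' T with hπ
  have pull : ∀ h : P, h ∈ Y → (π h) ∈ X.map π → h ∈ X := by
    intro h hY hmap
    obtain ⟨x, hx, hxh⟩ := hmap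
    have : x⁻¹ * h ∈ T := by
      rw [← QuotientGroup.ker_mk' T, MonoidHom.mem_ker, map_mul, map_inv, hxh,
        inv_mul_cancel]
    have hmem : x⁻¹ * h ∈ X := hTX ⟨Y.mul_mem (Y.inv_mem (hXY.le hx)) hY, this⟩
    simpa using X.mul_mem hx hmem
  have hlt : X.map π < Y.map π := by
    obtain ⟨y, hyY, hyX⟩ := SetLike.exists_of_lt hXY
    refine SetLike.lt_iff_le_and_exists.mpr ⟨Subgroup.map_mono hXY.le,
      ⟨π y, Subgroup.mem_map_of_mem _ hyY, fun hc => hyX (pull y hyY hc)⟩⟩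
  obtain ⟨q, hqK, hqH, hqN⟩ := pgroup_finite_rel_normalizer (hPp.to_quotient T) hlt
  obtain ⟨g, hgY, hgq⟩ := hqK
  refine ⟨g, hgY, fun hc => hqH (hgq ▸ Subgroup.mem_map_of_mem _ hc), ?_⟩
  rw [Subgroup.mem_normalizer_iff]
  intro h
  constructor
  · intro hh
    refine pull _ (Y.mul_mem (Y.mul_mem hgY (hXY.le hh)) (Y.inv_mem hgY)) ?_
    have : π (g * h * g⁻¹) = q * π h * q⁻¹ := by rw [map_mul, map_mul, map_inv, hgq]
    rw [this]
    exact (Subgroup.mem_normalizer_iff.mp hqN _).mp (Subgroup.mem_map_of_mem _ hh)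
  · intro hgh
    have hhY : h ∈ Y := by
      have : g⁻¹ * (g * h * g⁻¹) * g ∈ Y :=
        Y.mul_mem (Y.mul_mem (Y.inv_mem hgY) (hXY.le hgh)) hgY
      simpa [mul_assoc] using this
    refine pull _ hhY ?_
    refine (Subgroup.mem_normalizer_iff.mp hqN _).mpr ?_
    have : q * π h * q⁻¹ = π (g * h * g⁻¹) := by rw [map_mul, map_mul, map_inv, hgq]
    rw [this]
    exact Subgroup.mem_map_of_mem _ hgh

end CaseA

section CaseB
variable {p : ℕ} [Fact p.Prime] {P : Type*} [Group P]

lemma caseB (hPp : IsPGroup p P) (T : Subgroup P) (hT : IsPTorus p ↥T)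
    [hTn : T.Normal] [T.FiniteIndex] {X Y : Subgroup P} (hXY : X < Y)
    (hnt : ¬(Y ⊓ T ≤ X)) :
    ∃ g ∈ Y, g ∉ X ∧ g ∈ normalizer (X : Set P) := by
  obtain ⟨t₀, ht₀A, ht₀X⟩ := SetLike.not_le_iff_exists.mp hnt
  set A : Subgroup P := Y ⊓ T with hA
  have hAT : A ≤ T := inf_le_right
  have hAY : A ≤ Y := inf_le_left
  letI : CommGroup ↥A :=
    { (inferInstance : Group ↥A) with
      mul_comm := fun a b => Subtype.ext (torus_comm hT (hAT a.2) (hAT b.2)) }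
  set B : Subgroup ↥A := X.subgroupOf A with hB
  -- conjugation homomorphisms
  have hconjmem : ∀ (x : ↥X) (a : ↥A), ((x : P) * a * (x : P)⁻¹) ∈ A := by
    intro x a
    exact ⟨Y.mul_mem (Y.mul_mem (hXY.le x.2) (hAY a.2)) (Y.inv_mem (hXY.le x.2)),
      hTn.conj_mem _ (hAT a.2) _⟩
  set φ : ↥X → ↥A →* ↥A := fun x =>
    { toFun := fun a => ⟨(x : P) * a * (x : P)⁻¹, hconjmem x a⟩
      map_one' := by ext; simp
      map_mul' := fun a b => by ext; push_cast; group } with hφ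
  have hφ_coe : ∀ (x : ↥X) (a : ↥A), (φ x a : P) = (x : P) * a * (x : P)⁻¹ :=
    fun x a => rfl
  have hφcomap : ∀ x : ↥X, B ≤ B.comap (φ x) := by
    intro x a ha
    have ha' : (a : P) ∈ X := ha
    show ((x : P) * a * (x : P)⁻¹) ∈ X
    exact X.mul_mem (X.mul_mem x.2 ha') (X.inv_mem x.2)
  set ρ : ↥X → (↥A ⧸ B) →* (↥A ⧸ B) := fun x => QuotientGroup.map B B (φ x) (hφcomap x)
    with hρ
  have hρ_mk : ∀ (x : ↥X) (a : ↥A), ρ x (QuotientGroup.mk a) = QuotientGroup.mk (φ x a) :=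
    fun x a => QuotientGroup.map_mk B B (φ x) (hφcomap x) a
  have hρ_one : ∀ m, ρ 1 m = m := by
    intro m
    induction m using QuotientGroup.induction_on with
    | H a => rw [hρ_mk]; congr 1; ext; rw [hφ_coe]; simp
  have hρ_mul : ∀ (x y : ↥X) (m), ρ (x * y) m = ρ x (ρ y m) := by
    intro x y m
    induction m using QuotientGroup.induction_on with
    | H a =>
      rw [hρ_mk, hρ_mk, hρ_mk]
      congr 1
      ext
      rw [hφ_coe, hφ_coe, hφ_coe]
      push_cast
      group
  letI : MulAction ↥X (↥A ⧸ B) :=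
    { smul := fun x m => ρ x m
      one_smul := hρ_one
      mul_smul := hρ_mul }
  have hsmul_def : ∀ (x : ↥X) (m : ↥A ⧸ B), x • m = ρ x m := fun _ _ => rfl
  set a₀ : ↥A := ⟨t₀, ht₀A⟩ with ha₀
  set m₀ : ↥A ⧸ B := QuotientGroup.mk a₀ with hm₀def
  have hm₀ : m₀ ≠ 1 := by
    intro h
    exact ht₀X ((Subgroup.mem_subgroupOf).mp ((QuotientGroup.eq_one_iff a₀).mp h))
  -- finiteness of the orbit
  haveI : Finite (P ⧸ T) := Subgroup.finite_quotient_of_finiteIndex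
  set S : Set (↥A ⧸ B) := Set.range (fun x : ↥X => ρ x m₀) with hS
  have hfactor : ∀ x y : ↥X, ((x : P) : P ⧸ T) = ((y : P) : P ⧸ T) → ρ x m₀ = ρ y m₀ := by
    intro x y hxy
    have hs : (x : P)⁻¹ * y ∈ T := QuotientGroup.eq.mp hxy
    rw [hm₀def, hρ_mk, hρ_mk]
    congr 1
    ext
    rw [hφ_coe, hφ_coe]
    have hcomm : ((x : P)⁻¹ * y) * t₀ * ((x : P)⁻¹ * y)⁻¹ = t₀ := by
      rw [torus_comm hT hs ht₀A.2]; group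
    have hy : (y : P) = x * ((x : P)⁻¹ * y) := by group
    conv_rhs => rw [hy]
    rw [show ((x : P) * ((x : P)⁻¹ * y)) * (a₀ : P) * ((x : P) * ((x : P)⁻¹ * y))⁻¹
        = (x : P) * (((x : P)⁻¹ * y) * t₀ * ((x : P)⁻¹ * y)⁻¹) * (x : P)⁻¹ from by group; rfl,
      hcomm]
  have hSfin : S.Finite := by
    set q : ↥X → P ⧸ T := fun x => ((x : P) : P ⧸ T) with hq
    have hsub : S ⊆ Set.range (fun d : Set.range q => ρ d.2.choose m₀) := by
      rintro - ⟨x, rfl⟩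
      exact ⟨⟨q x, ⟨x, rfl⟩⟩, hfactor _ _ (⟨x, rfl⟩ : q x ∈ Set.range q).choose_spec⟩
    exact Set.Finite.subset (Set.finite_range _) hsub
  set N : Subgroup (↥A ⧸ B) := Subgroup.closure S with hN
  haveI : Finite ↥S := hSfin.to_subtype
  haveI hFG : Group.FG ↥N := Group.closure_finite_fg S
  have hMp : IsPGroup p (↥A ⧸ B) := by
    intro z
    induction z using QuotientGroup.induction_on with
    | H a =>
      obtain ⟨n, hn⟩ := hPp (a : P)
      refine ⟨n, ?_⟩
      rw [← QuotientGroup.mk_pow]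
      have : a ^ p ^ n = 1 := Subtype.ext (by push_cast; exact hn)
      rw [this, QuotientGroup.mk_one]
  have htor : Monoid.IsTorsion (↥A ⧸ B) := by
    intro z
    obtain ⟨n, hn⟩ := hMp z
    exact isOfFinOrder_iff_pow_eq_one.mpr ⟨p ^ n, pow_pos (Fact.out : p.Prime).pos n, hn⟩
  haveI hNfin : Finite ↥N := CommGroup.finite_of_fg_torsion ↥N (IsTorsion.subgroup htor N)
  have hNp : IsPGroup p ↥N := hMp.to_subgroup N
  have hinv : ∀ (x : ↥X) (m : ↥A ⧸ B), m ∈ N → ρ x m ∈ N := by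
    intro x m hm
    have hmap : N.map (ρ x) ≤ N := by
      rw [hN, MonoidHom.map_closure]
      refine Subgroup.closure_le _ |>.mpr ?_
      rintro - ⟨-, ⟨y, rfl⟩, rfl⟩
      exact Subgroup.subset_closure ⟨x * y, hρ_mul x y m₀⟩
    exact hmap (Subgroup.mem_map_of_mem _ hm)
  letI : MulAction ↥X ↥N :=
    { smul := fun x n => ⟨ρ x ↑n, hinv x _ n.2⟩
      one_smul := fun n => Subtype.ext (hρ_one _)
      mul_smul := fun x y n => Subtype.ext (hρ_mul x y _) }
  have hone_fix : (1 : ↥N) ∈ MulAction.fixedPoints ↥X ↥N := by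
    intro x
    refine Subtype.ext ?_
    show ρ x ((1 : ↥N) : ↥A ⧸ B) = ((1 : ↥N) : ↥A ⧸ B)
    simp
  have hm₀N : m₀ ∈ N := Subgroup.subset_closure ⟨1, hρ_one m₀⟩
  haveI : Nontrivial ↥N := ⟨⟨⟨m₀, hm₀N⟩, 1, by simp [Subtype.ext_iff, hm₀]⟩⟩
  obtain ⟨d, hd0, hdcard⟩ := hNp.nontrivial_iff_card.mp inferInstance
  have hpdvd : p ∣ Nat.card ↥N := hdcard ▸ dvd_pow_self p hd0.ne'
  obtain ⟨b, hbfix, hb1⟩ :=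
    (hPp.to_subgroup X).exists_fixed_point_of_prime_dvd_card_of_fixed_point ↥N hpdvd hone_fix
  obtain ⟨a, ha⟩ := QuotientGroup.mk_surjective ((b : ↥N) : ↥A ⧸ B)
  have hfix : ∀ x : ↥X, ρ x (QuotientGroup.mk a) = QuotientGroup.mk a := by
    intro x
    have := hbfix x
    have h2 : ρ x ((b : ↥N) : ↥A ⧸ B) = ((b : ↥N) : ↥A ⧸ B) := by
      exact congrArg Subtype.val this
    rwa [← ha] at h2
  set g : P := (a : P) with hg
  have hgA : g ∈ A := a.2
  have hkey : ∀ x : ↥X, ((x : P) * g * (x : P)⁻¹)⁻¹ * g ∈ X := by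
    intro x
    have h1 := hfix x
    rw [hρ_mk] at h1
    have h2 : (φ x a)⁻¹ * a ∈ B := QuotientGroup.eq.mp h1
    have h3 : ((φ x a : P))⁻¹ * a ∈ X := h2
    rwa [hφ_coe] at h3
  have hgX : g ∉ X := by
    intro hc
    have : a ∈ B := hc
    have : QuotientGroup.mk a = (1 : ↥A ⧸ B) := (QuotientGroup.eq_one_iff a).mpr this
    rw [ha] at this
    exact hb1 (Subtype.ext (by simpa using this.symm))
  refine ⟨g, hAY hgA, hgX, ?_⟩
  rw [Subgroup.mem_normalizer_iff]
  intro h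
  constructor
  · intro hh
    have hk := hkey ⟨h, hh⟩⁻¹
    have hk' : (h⁻¹ * g * h)⁻¹ * g ∈ X := by simpa using hk
    have huT : h⁻¹ * g * h ∈ T := by
      have := hTn.conj_mem g (hAT hgA) h⁻¹
      simpa using this
    have hcomm : (h⁻¹ * g * h) * g⁻¹ = g⁻¹ * (h⁻¹ * g * h) := by
      rw [torus_comm hT huT (T.inv_mem (hAT hgA))]
    have hmem : (h⁻¹ * g * h) * g⁻¹ ∈ X := by
      rw [hcomm]
      have := X.inv_mem hk'
      simpa [mul_assoc] using this
    have : g * h * g⁻¹ = h * ((h⁻¹ * g * h) * g⁻¹) := by group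
    rw [this]
    exact X.mul_mem hh hmem
  · intro hgh
    have hk := hkey ⟨g * h * g⁻¹, hgh⟩⁻¹
    have hk' : ((g * h * g⁻¹)⁻¹ * g * (g * h * g⁻¹))⁻¹ * g ∈ X := by simpa using hk
    have : h = (g * h * g⁻¹) * (((g * h * g⁻¹)⁻¹ * g * (g * h * g⁻¹))⁻¹ * g) := by group
    rw [this]
    exact X.mul_mem hgh hk'

end CaseB


/-- Normalizer-increasing property: in a discrete `p`-toral group, a proper
subgroup `X < Y` is proper in its normalizer in `Y`. -/
theorem discretePToral_normalizer_increasing (p : ℕ) [Fact p.Prime]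
    (P : Type*) [Group P] (hP : IsDiscretePToral p P)
    (X Y : Subgroup P) (hXY : X < Y) :
    X < Y ⊓ normalizer (X : Set P) := by
  obtain ⟨hPp, T, hT, hFI⟩ := hP
  haveI := hFI
  haveI : T.Normal := torus_normal hPp T hT hFI
  have key : ∃ g ∈ Y, g ∉ X ∧ g ∈ normalizer (X : Set P) := by
    by_cases hc : Y ⊓ T ≤ X
    · exact caseA hPp T hXY hc
    · exact caseB hPp T hT hXY hc
  obtain ⟨g, hgY, hgX, hgN⟩ := key
  exact SetLike.lt_iff_le_and_exists.mpr
    ⟨le_inf hXY.le Subgroup.le_normalizer, g, Subgroup.mem_inf.mpr ⟨hgY, hgN⟩, hgX⟩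
end

section
/- If P is a subgroup of a p-torus Q, then either P = Q or the rank of P (the rank of its maximal divisible subgroup) is strictly less than the rank of Q. -/
open Subgroup

section Aux

local notation "QZ" => ℚ ⧸ AddSubgroup.zmultiples (1 : ℚ)

/-- The homomorphism `ℤ → ℚ/ℤ` sending `a` to `a / N`. -/
noncomputable def torPhi (N : ℕ) : ℤ →+ QZ :=
  zmultiplesHom _ (QuotientAddGroup.mk (1 / (N : ℚ)))

lemma torPhi_apply (N : ℕ) (a : ℤ) :
    torPhi N a = QuotientAddGroup.mk ((a : ℚ) / (N : ℚ)) := by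
  show a • (QuotientAddGroup.mk (1 / (N : ℚ)) : QZ) = _
  rw [← QuotientAddGroup.mk_zsmul]
  congr 1
  rw [zsmul_eq_mul]
  push_cast
  ring

lemma torPhi_ker (N : ℕ) (hN : 0 < N) :
    (torPhi N).ker = AddSubgroup.zmultiples (N : ℤ) := by
  have hN' : (N : ℚ) ≠ 0 := by exact_mod_cast hN.ne'
  ext a
  simp only [AddMonoidHom.mem_ker, torPhi_apply, QuotientAddGroup.eq_zero_iff,
    AddSubgroup.mem_zmultiples_iff, zsmul_eq_mul, smul_eq_mul, mul_one]
  constructor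
  · rintro ⟨k, hk⟩
    exact ⟨k, by exact_mod_cast (eq_div_iff hN').mp hk⟩
  · rintro ⟨k, hk⟩
    refine ⟨k, ?_⟩
    rw [eq_div_iff hN']
    exact_mod_cast hk

lemma torPhi_range (N : ℕ) (hN : 0 < N) :
    Set.range (torPhi N) = {x : QZ | N • x = 0} := by
  have hN' : (N : ℚ) ≠ 0 := by exact_mod_cast hN.ne'
  ext x
  simp only [Set.mem_range, Set.mem_setOf_eq]
  constructor
  · rintro ⟨a, rfl⟩
    rw [torPhi_apply, ← QuotientAddGroup.mk_nsmul]
    rw [QuotientAddGroup.eq_zero_iff, AddSubgroup.mem_zmultiples_iff]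
    refine ⟨a, ?_⟩
    rw [zsmul_eq_mul, mul_one, nsmul_eq_mul]
    field_simp
  · intro hx
    obtain ⟨q, rfl⟩ := QuotientAddGroup.mk_surjective x
    rw [← QuotientAddGroup.mk_nsmul, QuotientAddGroup.eq_zero_iff,
      AddSubgroup.mem_zmultiples_iff] at hx
    obtain ⟨k, hk⟩ := hx
    rw [zsmul_eq_mul, mul_one, nsmul_eq_mul] at hk
    refine ⟨k, ?_⟩
    rw [torPhi_apply]
    congr 1
    rw [div_eq_iff hN', hk]
    ring

lemma card_torsion_QZ (N : ℕ) (hN : 0 < N) :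
    Nat.card {x : QZ // N • x = 0} = N := by
  have hmem := Set.ext_iff.mp (torPhi_range N hN)
  have h1 : Nat.card {x : QZ // N • x = 0} = Nat.card (torPhi N).range :=
    Nat.card_congr (Equiv.subtypeEquivRight fun x => (hmem x).symm)
  rw [h1, ← Nat.card_congr (QuotientAddGroup.quotientKerEquivRange (torPhi N)).toEquiv,
    torPhi_ker N hN, Nat.card_congr (Int.quotientZMultiplesNatEquivZMod N).toEquiv,
    Nat.card_zmod]

variable (p : ℕ) [Fact p.Prime]

lemma card_prufer_torsion (j : ℕ) :
    Nat.card {x : Prufer p // x ^ (p ^ j) = 1} = p ^ j := by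
  have hpj : 0 < p ^ j := pow_pos (Fact.out (p := p.Prime)).pos j
  have key : ∀ x : Prufer p, x ^ (p ^ j) = 1 ↔
      (p ^ j) • ((Multiplicative.toAdd x : AddCommGroup.primaryComponent QZ p) : QZ) = 0 := by
    intro x
    constructor
    · intro h
      have : Multiplicative.toAdd (x ^ (p ^ j)) = 0 := by rw [h]; rfl
      replace this := (toAdd_pow x (p ^ j)).symm.trans this
      have := congrArg (Subtype.val) this
      simpa using this
    · intro h
      have : (p ^ j) • (Multiplicative.toAdd x) = 0 := by
        ext
        simpa using h
      have : Multiplicative.toAdd (x ^ (p ^ j)) = 0 := (toAdd_pow x (p ^ j)).trans this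
      exact this
  have e : {x : Prufer p // x ^ (p ^ j) = 1} ≃ {x : QZ // (p ^ j) • x = 0} := by
    refine Equiv.ofBijective
      (fun x => ⟨((Multiplicative.toAdd x.1 : AddCommGroup.primaryComponent QZ p) : QZ),
        (key x.1).mp x.2⟩) ⟨?_, ?_⟩
    · intro a b hab
      apply Subtype.ext
      apply Multiplicative.toAdd.injective
      exact Subtype.ext (by simpa using congrArg Subtype.val hab)
    · rintro ⟨x, hx⟩
      have hmem : x ∈ AddCommGroup.primaryComponent QZ p := by
        have hdvd : addOrderOf x ∣ p ^ j := addOrderOf_dvd_iff_nsmul_eq_zero.mpr hx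
        obtain ⟨i, _, hi⟩ := (Nat.dvd_prime_pow (Fact.out (p := p.Prime))).mp hdvd
        exact ⟨i, by rw [← hi]; exact addOrderOf_nsmul_eq_zero x⟩
      refine ⟨⟨Multiplicative.ofAdd ⟨x, hmem⟩, ?_⟩, rfl⟩
      refine (key _).mpr ?_
      simpa using hx
  rw [Nat.card_congr e, card_torsion_QZ _ hpj]

lemma prufer_isPGroup : IsPGroup p (Prufer p) := by
  intro x
  obtain ⟨i, hi⟩ := (Multiplicative.toAdd x).2
  refine ⟨i, ?_⟩
  have hsmul : (p ^ i) • ((Multiplicative.toAdd x : AddCommGroup.primaryComponent QZ p) : QZ)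
      = 0 := by
    rw [← hi]
  have : (p ^ i) • (Multiplicative.toAdd x) = 0 := by
    ext
    simpa using hsmul
  have : Multiplicative.toAdd (x ^ (p ^ i)) = 0 := (toAdd_pow x (p ^ i)).trans this
  exact this

lemma isPGroup_pi {ι : Type*} [Fintype ι] {H : ι → Type*} [∀ i, Group (H i)]
    (h : ∀ i, IsPGroup p (H i)) : IsPGroup p (∀ i, H i) := by
  intro v
  choose f hf using fun i => h i (v i)
  refine ⟨Finset.univ.sup f, ?_⟩
  funext i
  have hle : f i ≤ Finset.univ.sup f := Finset.le_sup (Finset.mem_univ i)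
  have : v i ^ p ^ Finset.univ.sup f = 1 := by
    rw [← Nat.sub_add_cancel hle, pow_add, pow_mul', hf i, one_pow]
  simpa using this

lemma card_torus_torsion {G : Type*} [Group G] (k j : ℕ)
    (e : G ≃* (Fin k → Prufer p)) :
    Nat.card {x : G // x ^ p ^ j = 1} = p ^ (k * j) := by
  have e1 : {x : G // x ^ p ^ j = 1} ≃ {v : Fin k → Prufer p // v ^ p ^ j = 1} :=
    Equiv.subtypeEquiv e.toEquiv (fun x => by
      constructor
      · intro h
        show e x ^ p ^ j = 1
        rw [← map_pow, h, map_one]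
      · intro h
        have : e (x ^ p ^ j) = e 1 := by rw [map_pow, map_one]; exact h
        exact e.injective this)
  have e2 : {v : Fin k → Prufer p // v ^ p ^ j = 1} ≃
      {v : Fin k → Prufer p // ∀ i, v i ^ p ^ j = 1} :=
    Equiv.subtypeEquivRight (fun v => by
      constructor
      · intro h i
        have := congrFun h i
        simpa using this
      · intro h
        funext i
        simpa using h i)
  have e3 : {v : Fin k → Prufer p // ∀ i, v i ^ p ^ j = 1} ≃
      (Fin k → {y : Prufer p // y ^ p ^ j = 1}) :=
    Equiv.subtypePiEquivPi (β := fun _ : Fin k => Prufer p) (p := fun _ y => y ^ p ^ j = 1)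
  rw [Nat.card_congr (e1.trans (e2.trans e3)), Nat.card_fun, card_prufer_torsion,
    Nat.card_eq_fintype_card, Fintype.card_fin, ← pow_mul, mul_comm j k]

end Aux

/-- A subgroup of a `p`-torus is either the whole torus or has strictly
smaller rank (rank of its maximal torus). -/
theorem subgroup_of_torus_rank (p : ℕ) [Fact p.Prime] (Q : Type*) [Group Q]
    (n : ℕ) (hQ : IsPTorusOfRank p n Q)
    (P : Subgroup Q)
    (T : Subgroup Q) (hTP : T ≤ P) (m : ℕ) (hT : IsPTorusOfRank p m T)
    (hTmax : ∀ R : Subgroup Q, R ≤ P → IsPTorus p R → R ≤ T) :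
    P = ⊤ ∨ m < n := by
  by_cases hmn : m < n
  · exact Or.inr hmn
  push_neg at hmn
  left
  obtain ⟨eQ⟩ := hQ
  obtain ⟨eT⟩ := hT
  have hp1 : 1 < p := (Fact.out (p := p.Prime)).one_lt
  have cardQ : ∀ j, Nat.card {x : Q // x ^ p ^ j = 1} = p ^ (n * j) :=
    fun j => card_torus_torsion p n j eQ
  have cardT : ∀ j, Nat.card {x : T // x ^ p ^ j = 1} = p ^ (m * j) :=
    fun j => card_torus_torsion p m j eT
  have hfinQ : ∀ j, Finite {x : Q // x ^ p ^ j = 1} := fun j =>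
    Nat.finite_of_card_ne_zero (by rw [cardQ j]; positivity)
  -- inclusion maps
  set ι : ∀ j, {x : T // x ^ p ^ j = 1} → {x : Q // x ^ p ^ j = 1} :=
    fun j x => ⟨(x.1 : Q), by
      have := congrArg (Subtype.val : T → Q) x.2
      simpa using this⟩ with hι
  have hinj : ∀ j, Function.Injective (ι j) := by
    intro j a b hab
    have h2 := congrArg (fun z : {x : Q // x ^ p ^ j = 1} => (z : Q)) hab
    exact Subtype.ext (Subtype.ext h2)
  have hmn' : m = n := by
    have := hfinQ 1
    have h1 := Nat.card_le_card_of_injective _ (hinj 1)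
    rw [cardQ 1, cardT 1, mul_one, mul_one] at h1
    exact le_antisymm ((Nat.pow_le_pow_iff_right hp1).mp h1) hmn
  have hsurj : ∀ j, Function.Surjective (ι j) := by
    intro j
    have := hfinQ j
    exact ((Nat.bijective_iff_injective_and_card (ι j)).mpr
      ⟨hinj j, by rw [cardQ j, cardT j, hmn']⟩).2
  -- Q is a p-group
  have hQp : IsPGroup p Q :=
    (isPGroup_pi p (fun _ => prufer_isPGroup p)).of_injective eQ.toMonoidHom eQ.injective
  rw [eq_top_iff]
  intro q _
  obtain ⟨j, hj⟩ := hQp q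
  obtain ⟨t, ht⟩ := hsurj j ⟨q, hj⟩
  have hq : (t.1 : Q) = q := congrArg Subtype.val ht
  exact hTP (hq ▸ t.1.2)
end

section
/- Let F be a saturated fusion system over a discrete p-toral group S with maximal torus T, in which Out_F(P) is finite for all P ≤ S. If R ≤ S is a p-torus, R' is an F-conjugate of R, and α: R → R' is an F-isomorphism, then R and R' are contained in T, and α extends to an F-automorphism of T. -/
open Subgroup

/-- A fusion system over a group `S`: for each subgroup `P ≤ S` a set of
homomorphisms `P → S` (the `F`-homomorphisms with source `P`), injective,
containing all conjugation maps, and closed under restriction, composition,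
and inverses of isomorphisms. -/
structure FusionSystem (p : ℕ) [Fact p.Prime] (S : Type*) [Group S] where
  hom : ∀ P : Subgroup S, Set (↥P →* S)
  inj : ∀ P : Subgroup S, ∀ f ∈ hom P, Function.Injective f
  conj_mem : ∀ (P : Subgroup S) (g : S),
    (MulAut.conj g).toMonoidHom.comp P.subtype ∈ hom P
  restrict_mem : ∀ (P Q : Subgroup S) (h : P ≤ Q), ∀ f ∈ hom Q,
    f.comp (Subgroup.inclusion h) ∈ hom P
  comp_mem : ∀ (P Q : Subgroup S) (f : ↥P →* S) (_ : f ∈ hom P)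
    (hrange : ∀ x, f x ∈ Q), ∀ g ∈ hom Q,
    g.comp (f.codRestrict Q hrange) ∈ hom P
  inv_mem : ∀ (P Q : Subgroup S) (e : ↥P ≃* ↥Q),
    Q.subtype.comp e.toMonoidHom ∈ hom P →
      P.subtype.comp e.symm.toMonoidHom ∈ hom Q

namespace FusionSystem

variable {p : ℕ} [Fact p.Prime] {S : Type*} [Group S]

/-- `Q` is an `F`-conjugate of `P`: there is an `F`-isomorphism `P → Q`. -/
def FConj (F : FusionSystem p S) (P Q : Subgroup S) : Prop :=
  ∃ f : ↥P →* S, f ∈ F.hom P ∧ f.range = Q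

/-- `|A| ≤ |B|` in the lexicographic order on the pairs
`(rank of maximal torus, index of the maximal torus)` of discrete `p`-toral
groups. -/
def OrdLE (p : ℕ) [Fact p.Prime] {S : Type*} [Group S] (A B : Subgroup S) : Prop :=
  ∃ (TA TB : Subgroup S) (m n : ℕ),
    TA ≤ A ∧ IsPTorusOfRank p m TA ∧ (∀ R : Subgroup S, R ≤ A → IsPTorus p R → R ≤ TA) ∧
    TB ≤ B ∧ IsPTorusOfRank p n TB ∧ (∀ R : Subgroup S, R ≤ B → IsPTorus p R → R ≤ TB) ∧
    (m < n ∨ (m = n ∧ TA.relIndex A ≤ TB.relIndex B))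

/-- `P` is fully normalized in `F`: `|N_S(P)| ≥ |N_S(Q)|` for all
`F`-conjugates `Q` of `P`. -/
def FullyNormalized (F : FusionSystem p S) (P : Subgroup S) : Prop :=
  ∀ Q : Subgroup S, F.FConj P Q → OrdLE p (Subgroup.normalizer (Q : Set S)) (Subgroup.normalizer (P : Set S))

/-- The group `Aut_F(P)` of `F`-automorphisms of `P`. -/
def autF (F : FusionSystem p S) (P : Subgroup S) : Subgroup (MulAut ↥P) :=
  Subgroup.closure {φ : MulAut ↥P | P.subtype.comp φ.toMonoidHom ∈ F.hom P}

/-- The group `Aut_S(P)` of automorphisms of `P` induced by conjugation by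
elements of `N_S(P)`. -/
def autS (P : Subgroup S) : Subgroup (MulAut ↥P) :=
  Subgroup.closure
    {φ : MulAut ↥P | ∃ g ∈ (Subgroup.normalizer (P : Set S)), ∀ x : ↥P, (φ x : S) = g⁻¹ * x * g}

/-- The group `Inn(P) = Aut_P(P)` of inner automorphisms of `P`. -/
def autInn (P : Subgroup S) : Subgroup (MulAut ↥P) :=
  Subgroup.closure
    {φ : MulAut ↥P | ∃ g ∈ P, ∀ x : ↥P, (φ x : S) = g⁻¹ * x * g}

/-- `P` is fully automized in `F`: `Aut_S(P)` is a Sylow `p`-subgroup of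
`Aut_F(P)`, i.e. has finite index prime to `p` in `Aut_F(P)`. -/
def FullyAutomized (F : FusionSystem p S) (P : Subgroup S) : Prop :=
  (autS P).relIndex (F.autF P) ≠ 0 ∧ ¬ p ∣ (autS P).relIndex (F.autF P)

/-- `Out_F(P)` is finite: `Inn(P)` has finite index in `Aut_F(P)`. -/
def OutFinite (F : FusionSystem p S) (P : Subgroup S) : Prop :=
  (autInn P).relIndex (F.autF P) ≠ 0

/-- `V` is receptive in `F`: every `F`-isomorphism `f : P → V` extends to any
subgroup `P ≤ N ≤ N_S(P)` on which conjugation is intertwined by `f` with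
conjugation by elements of `N_S(V)` (i.e. any `N` inside `N_f`). -/
def Receptive (F : FusionSystem p S) (V : Subgroup S) : Prop :=
  ∀ (P : Subgroup S) (f : ↥P →* S), f ∈ F.hom P → f.range = V →
    ∀ N : Subgroup S, P ≤ N → N ≤ (Subgroup.normalizer (P : Set S)) →
      (∀ g ∈ N, ∃ h ∈ (Subgroup.normalizer (V : Set S)), ∀ (x : S) (hx : x ∈ P) (hx' : g⁻¹ * x * g ∈ P),
        f ⟨g⁻¹ * x * g, hx'⟩ = h⁻¹ * f ⟨x, hx⟩ * h) →
      ∃ fbar : ↥N →* S, fbar ∈ F.hom N ∧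
        ∀ (x : S) (hx : x ∈ P) (hx' : x ∈ N), fbar ⟨x, hx'⟩ = f ⟨x, hx⟩

/-- `F` is saturated: every subgroup has a fully automized, receptive, fully
normalized `F`-conjugate. -/
def Saturated (F : FusionSystem p S) : Prop :=
  ∀ P : Subgroup S, ∃ Q : Subgroup S,
    F.FConj P Q ∧ F.FullyNormalized Q ∧ F.FullyAutomized Q ∧ F.Receptive Q

end FusionSystem

section Aux

variable {p : ℕ} [Fact p.Prime]

/-- The `m`-torsion of a group transports along a `MulEquiv`. -/
def torsionEquiv {G H : Type*} [Group G] [Group H] (e : G ≃* H) (m : ℕ) :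
    {g : G // g ^ m = 1} ≃ {h : H // h ^ m = 1} where
  toFun g := ⟨e g.1, by rw [← map_pow, g.2, map_one]⟩
  invFun h := ⟨e.symm h.1, by rw [← map_pow, h.2, map_one]⟩
  left_inv g := Subtype.ext (e.symm_apply_apply g.1)
  right_inv h := Subtype.ext (e.apply_symm_apply h.1)

lemma rat_quot_torsion_finite (m : ℕ) (hm : m ≠ 0) :
    {q : ℚ ⧸ AddSubgroup.zmultiples (1 : ℚ) | m • q = 0}.Finite := by
  have hm' : (m : ℚ) ≠ 0 := Nat.cast_ne_zero.mpr hm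
  set π := QuotientAddGroup.mk' (AddSubgroup.zmultiples (1 : ℚ)) with hπ
  set a := π ((m : ℚ)⁻¹) with ha_def
  have ha : m • a = 0 := by
    rw [ha_def, ← map_nsmul, QuotientAddGroup.mk'_apply, QuotientAddGroup.eq_zero_iff,
      nsmul_eq_mul, mul_inv_cancel₀ hm']
    exact AddSubgroup.mem_zmultiples 1
  have hfin : IsOfFinAddOrder a :=
    isOfFinAddOrder_iff_nsmul_eq_zero.mpr ⟨m, Nat.pos_of_ne_zero hm, ha⟩
  refine hfin.finite_zmultiples.subset ?_
  intro q hq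
  obtain ⟨r, rfl⟩ := QuotientAddGroup.mk'_surjective _ q
  have h1 : m • r ∈ AddSubgroup.zmultiples (1 : ℚ) := by
    rw [← QuotientAddGroup.eq_zero_iff, ← QuotientAddGroup.mk'_apply, map_nsmul]
    exact hq
  obtain ⟨z, hz⟩ := AddSubgroup.mem_zmultiples_iff.mp h1
  have hr : r = z • ((m : ℚ)⁻¹) := by
    rw [zsmul_eq_mul, mul_one, nsmul_eq_mul] at hz
    rw [zsmul_eq_mul, hz, mul_comm (m : ℚ) r, mul_assoc, mul_inv_cancel₀ hm', mul_one]
  rw [hr]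
  exact AddSubgroup.mem_zmultiples_iff.mpr ⟨z, (map_zsmul π z _).symm⟩

lemma prufer_torsion_finite (m : ℕ) (hm : m ≠ 0) :
    Finite {x : Prufer p // x ^ m = 1} := by
  have hfin := rat_quot_torsion_finite m hm
  haveI : Finite {q : ℚ ⧸ AddSubgroup.zmultiples (1 : ℚ) // m • q = 0} := hfin.to_subtype
  refine Finite.of_injective (fun x : {x : Prufer p // x ^ m = 1} =>
    (⟨((Multiplicative.toAdd x.1 :
        AddCommGroup.primaryComponent (ℚ ⧸ AddSubgroup.zmultiples (1 : ℚ)) p) :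
          ℚ ⧸ AddSubgroup.zmultiples (1 : ℚ)), ?_⟩ :
      {q : ℚ ⧸ AddSubgroup.zmultiples (1 : ℚ) // m • q = 0})) ?_
  · have h : m • (Multiplicative.toAdd x.1) = 0 := by
      exact congrArg Multiplicative.toAdd x.2
    simpa using congrArg Subtype.val h
  · intro x y h
    rw [Subtype.mk.injEq] at h
    exact Subtype.ext (Multiplicative.toAdd.injective (Subtype.ext h))

lemma pi_prufer_torsion_finite (k m : ℕ) (hm : m ≠ 0) :
    Finite {v : Fin k → Prufer p // v ^ m = 1} := by
  haveI := fun _ : Fin k => prufer_torsion_finite (p := p) m hm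
  refine Finite.of_injective (fun v : {v : Fin k → Prufer p // v ^ m = 1} =>
    fun i => (⟨v.1 i, by simpa using congrFun v.2 i⟩ : {x : Prufer p // x ^ m = 1})) ?_
  intro v w h
  apply Subtype.ext
  funext i
  exact congrArg Subtype.val (congrFun h i)

/-- Co-Hopfian property: if `A ≤ B` are subgroups of a `p`-group `S`, both
isomorphic to the same `p`-torus, then `A = B`. -/
lemma subgroup_eq_of_equiv_torus {S : Type*} [Group S] (hPS : IsPGroup p S) (k : ℕ)
    {A B : Subgroup S} (hAB : A ≤ B)
    (eA : ↥A ≃* (Fin k → Prufer p)) (eB : ↥B ≃* (Fin k → Prufer p)) : A = B := by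
  refine le_antisymm hAB fun x hxB => ?_
  obtain ⟨n, hn⟩ := hPS x
  set m := p ^ n with hm
  have hm0 : m ≠ 0 := pow_ne_zero n (Fact.out (p := p.Prime)).pos.ne'
  haveI hγ : Finite {v : Fin k → Prufer p // v ^ m = 1} := pi_prufer_torsion_finite k m hm0
  haveI hβ : Finite {b : ↥B // b ^ m = 1} := Finite.of_equiv _ (torsionEquiv eB m).symm
  let eq1 : {a : ↥A // a ^ m = 1} ≃ {b : ↥B // b ^ m = 1} :=
    (torsionEquiv eA m).trans (torsionEquiv eB m).symm
  haveI hα : Finite {a : ↥A // a ^ m = 1} := Finite.of_equiv _ eq1.symm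
  let j : {a : ↥A // a ^ m = 1} → {b : ↥B // b ^ m = 1} :=
    fun a => ⟨⟨(a.1 : S), hAB a.1.2⟩, by
      apply Subtype.ext
      have := congrArg Subtype.val a.2
      simpa using this⟩
  have hjinj : Function.Injective j := by
    intro a b h
    exact Subtype.ext (Subtype.ext (congrArg (fun z : {b : ↥B // b ^ m = 1} => (z.1 : S)) h))
  have hjsurj : Function.Surjective j :=
    (Finite.injective_iff_surjective_of_equiv eq1).mp hjinj
  obtain ⟨a, ha⟩ := hjsurj ⟨⟨x, hxB⟩, Subtype.ext (by simpa using hn)⟩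
  have hax : (a.1 : S) = x := congrArg (fun z : {b : ↥B // b ^ m = 1} => (z.1 : S)) ha
  rw [← hax]
  exact a.1.2

lemma mul_comm_of_equiv_torus {S : Type*} [Group S] {k : ℕ} {B : Subgroup S}
    (eB : ↥B ≃* (Fin k → Prufer p)) :
    ∀ x ∈ B, ∀ y ∈ B, x * y = y * x := by
  intro x hx y hy
  have h : (⟨x, hx⟩ : ↥B) * ⟨y, hy⟩ = ⟨y, hy⟩ * ⟨x, hx⟩ :=
    eB.injective (by rw [map_mul, map_mul, mul_comm])
  exact congrArg Subtype.val h

/-- An `F`-isomorphism from `P ≤ T` onto a receptive subgroup `V` extends to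
all of `T`, provided `T` is commutative (e.g. a torus). -/
lemma extend_to_torus {S : Type*} [Group S] (F : FusionSystem p S)
    {T V P : Subgroup S} (hcomm : ∀ x ∈ T, ∀ y ∈ T, x * y = y * x)
    (hPT : P ≤ T) (hrec : F.Receptive V)
    (f : ↥P →* S) (hf : f ∈ F.hom P) (hfV : f.range = V) :
    ∃ fbar : ↥T →* S, fbar ∈ F.hom T ∧
      ∀ (x : S) (hx : x ∈ P) (hx' : x ∈ T), fbar ⟨x, hx'⟩ = f ⟨x, hx⟩ := by
  have hTN : T ≤ Subgroup.normalizer (P : Set S) := by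
    intro g hg
    rw [Subgroup.mem_normalizer_iff]
    intro h
    constructor
    · intro hh
      have hcg := hcomm g hg h (hPT hh)
      have hgh : g * h * g⁻¹ = h := by rw [hcg]; group
      rwa [hgh]
    · intro hh
      have hcg := hcomm (g * h * g⁻¹) (hPT hh) g hg
      have h2 : g * h = g * (g * h * g⁻¹) := by rw [← hcg]; group
      have h3 : h = g * h * g⁻¹ := mul_left_cancel h2
      rwa [h3]
  have hcond : ∀ g ∈ T, ∃ h ∈ Subgroup.normalizer (V : Set S),
      ∀ (x : S) (hx : x ∈ P) (hx' : g⁻¹ * x * g ∈ P),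
        f ⟨g⁻¹ * x * g, hx'⟩ = h⁻¹ * f ⟨x, hx⟩ * h := by
    intro g hg
    refine ⟨1, one_mem _, fun x hx hx' => ?_⟩
    have hxg : g⁻¹ * x * g = x := by
      have hc := hcomm x (hPT hx) g hg
      calc g⁻¹ * x * g = g⁻¹ * (x * g) := by group
        _ = g⁻¹ * (g * x) := by rw [hc]
        _ = x := by group
    rw [inv_one, one_mul, mul_one]
    exact congrArg f (Subtype.ext hxg)
  exact hrec P f hf hfV T hPT hTN hcond

end Aux

/-- In a saturated fusion system over a discrete `p`-toral group `S` with
maximal torus `T`, in which `Out_F(P)` is finite for all `P ≤ S`: every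
`F`-isomorphism `f : R → R'` between `p`-tori of `S` has `R, R' ≤ T` and
extends to an `F`-automorphism of `T`. -/
theorem torus_iso_extends_to_maximal_torus (p : ℕ) [Fact p.Prime]
    (S : Type*) [Group S] (hS : IsDiscretePToral p S)
    (T : Subgroup S) (hT : IsPTorus p T) (hTfi : T.FiniteIndex)
    (hTmax : ∀ R : Subgroup S, IsPTorus p R → R ≤ T)
    (F : FusionSystem p S) (hsat : F.Saturated)
    (hout : ∀ P : Subgroup S, F.OutFinite P)
    (R : Subgroup S) (hR : IsPTorus p R)
    (R' : Subgroup S)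
    (f : ↥R →* S) (hf : f ∈ F.hom R) (hfR' : f.range = R') :
    R ≤ T ∧ R' ≤ T ∧
      ∃ φ : ↥T ≃* ↥T, T.subtype.comp φ.toMonoidHom ∈ F.hom T ∧
        ∀ (x : S) (hx : x ∈ R) (hx' : x ∈ T), (φ ⟨x, hx'⟩ : S) = f ⟨x, hx⟩ := by
  obtain ⟨k, ⟨eT⟩⟩ := hT
  have hcomm : ∀ x ∈ T, ∀ y ∈ T, x * y = y * x := mul_comm_of_equiv_torus eT
  have hRT : R ≤ T := hTmax R hR
  have hfinj : Function.Injective f := F.inj R f hf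
  let e : ↥R ≃* ↥R' := (MonoidHom.ofInjective hfinj).trans (MulEquiv.subgroupCongr hfR')
  have he : ∀ x : ↥R, ((e x : S)) = f x := fun x => rfl
  have hR'tor : IsPTorus p ↥R' := by
    obtain ⟨k', ⟨eR⟩⟩ := hR
    exact ⟨k', ⟨e.symm.trans eR⟩⟩
  have hR'T : R' ≤ T := hTmax R' hR'tor
  obtain ⟨V, ⟨g, hg, hgV⟩, -, -, hrecep⟩ := hsat R
  obtain ⟨gbar, hgbar, hgbar_ext⟩ := extend_to_torus F hcomm hRT hrecep g hg hgV
  -- build ψ : R' →* S with range V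
  have heh : R'.subtype.comp e.toMonoidHom = f := by ext x; rfl
  have hfinvmem : R.subtype.comp e.symm.toMonoidHom ∈ F.hom R' :=
    F.inv_mem R R' e (by rw [heh]; exact hf)
  set finv := R.subtype.comp e.symm.toMonoidHom with hfinv_def
  have hfinv_range : ∀ y, finv y ∈ R := fun y => (e.symm y).2
  set ψ := g.comp (finv.codRestrict R hfinv_range) with hψ_def
  have hψ : ψ ∈ F.hom R' := F.comp_mem R' R finv hfinvmem hfinv_range g hg
  have hcod : ∀ u : ↥R, (finv.codRestrict R hfinv_range) (e u) = u := by
    intro u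
    apply Subtype.ext
    show (finv (e u) : S) = u
    show ((e.symm (e u) : ↥R) : S) = u
    rw [e.symm_apply_apply]
  have hψV : ψ.range = V := by
    rw [← hgV]
    ext s
    simp only [MonoidHom.mem_range, hψ_def, MonoidHom.comp_apply]
    constructor
    · rintro ⟨y, rfl⟩; exact ⟨_, rfl⟩
    · rintro ⟨u, rfl⟩
      exact ⟨e u, by rw [hcod]⟩
  obtain ⟨ψbar, hψbar, hψbar_ext⟩ := extend_to_torus F hcomm hR'T hrecep ψ hψ hψV
  -- the ranges of gbar and ψbar are all of T
  have hgbar_inj : Function.Injective gbar := F.inj T gbar hgbar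
  have hψbar_inj : Function.Injective ψbar := F.inj T ψbar hψbar
  have hgrange : gbar.range = T := by
    refine subgroup_eq_of_equiv_torus hS.1 k
      (hTmax _ ⟨k, ⟨(MonoidHom.ofInjective hgbar_inj).symm.trans eT⟩⟩)
      ((MonoidHom.ofInjective hgbar_inj).symm.trans eT) eT
  have hψrange : ψbar.range = T := by
    refine subgroup_eq_of_equiv_torus hS.1 k
      (hTmax _ ⟨k, ⟨(MonoidHom.ofInjective hψbar_inj).symm.trans eT⟩⟩)
      ((MonoidHom.ofInjective hψbar_inj).symm.trans eT) eT
  let eg2 : ↥T ≃* ↥T := (MonoidHom.ofInjective hgbar_inj).trans (MulEquiv.subgroupCongr hgrange)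
  let eps2 : ↥T ≃* ↥T := (MonoidHom.ofInjective hψbar_inj).trans (MulEquiv.subgroupCongr hψrange)
  have heg2 : ∀ x : ↥T, ((eg2 x : S)) = gbar x := fun x => rfl
  have heps2 : ∀ x : ↥T, ((eps2 x : S)) = ψbar x := fun x => rfl
  refine ⟨hRT, hR'T, eg2.trans eps2.symm, ?_, ?_⟩
  · have h1 : T.subtype.comp eps2.toMonoidHom = ψbar := by ext x; exact heps2 x
    have h2 : T.subtype.comp eps2.symm.toMonoidHom ∈ F.hom T :=
      F.inv_mem T T eps2 (by rw [h1]; exact hψbar)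
    have h3 : ∀ x, gbar x ∈ T := fun x => hgrange.le ⟨x, rfl⟩
    have h4 := F.comp_mem T T gbar hgbar h3 _ h2
    have h5 : T.subtype.comp (eg2.trans eps2.symm).toMonoidHom =
        (T.subtype.comp eps2.symm.toMonoidHom).comp (gbar.codRestrict T h3) := by
      ext x
      show ((eps2.symm (eg2 x) : ↥T) : S) = ((eps2.symm ⟨gbar x, h3 x⟩ : ↥T) : S)
      exact congrArg (fun t : ↥T => ((eps2.symm t : ↥T) : S)) (Subtype.ext (heg2 x))
    rw [h5]
    exact h4
  · intro x hx hx'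
    have hfx : f ⟨x, hx⟩ ∈ R' := hfR' ▸ MonoidHom.mem_range.mpr ⟨_, rfl⟩
    have hfxT : f ⟨x, hx⟩ ∈ T := hR'T hfx
    have key : eps2 ⟨f ⟨x, hx⟩, hfxT⟩ = eg2 ⟨x, hx'⟩ := by
      apply Subtype.ext
      rw [heps2, heg2, hψbar_ext (f ⟨x, hx⟩) hfx hfxT, hgbar_ext x hx hx']
      show g ((finv.codRestrict R hfinv_range) ⟨f ⟨x, hx⟩, hfx⟩) = g ⟨x, hx⟩
      congr 1
      have hex : e ⟨x, hx⟩ = ⟨f ⟨x, hx⟩, hfx⟩ := Subtype.ext (he ⟨x, hx⟩)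
      rw [← hex, hcod]
    show ((eps2.symm (eg2 ⟨x, hx'⟩) : ↥T) : S) = f ⟨x, hx⟩
    rw [← key, eps2.symm_apply_apply]
end
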